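/- Let V_a ⪯ V_b be symmetric matrices with V_a ⪰ λI, and symmetric perturbations E_a, E_b of operator norm at most η with ρ := η/λ < 1, c_ρ := (1+ρ)/(1−ρ). If λ_max((V_a+E_a)^{-1/2}(V_b+E_b)(V_a+E_a)^{-1/2}) > α for some α > c_ρ, then det(V_b)/det(V_a) > α/c_ρ. -/

import Mathlib

open Matrix

section Helpers

variable {n : Type*} [Fintype n] [DecidableEq n]

omit [DecidableEq n] in
lemma quad_nonneg' {A : Matrix n n ℝ} (hA : A.PosSemidef) (x : n → ℝ) :
    0 ≤ x ⬝ᵥ A *ᵥ x := by simpa using hA.dotProduct_mulVec_nonneg x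

omit [DecidableEq n] in
lemma herm_dot' {B : Matrix n n ℝ} (hB : B.IsHermitian) (x y : n → ℝ) :
    x ⬝ᵥ B *ᵥ y = (B *ᵥ x) ⬝ᵥ y := by
  rw [dotProduct_mulVec, ← mulVec_transpose,
    ← conjTranspose_eq_transpose_of_trivial, hB.eq]

lemma rayleigh_le' {A : Matrix n n ℝ} (hA : A.IsHermitian) {μ : ℝ}
    (hμ : ∀ i, hA.eigenvalues i ≤ μ) (x : n → ℝ) :
    x ⬝ᵥ A *ᵥ x ≤ μ * (x ⬝ᵥ x) := by
  set U : Matrix n n ℝ := (hA.eigenvectorUnitary : Matrix n n ℝ) with hUdef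
  have hU : U * star U = 1 := mem_unitaryGroup_iff.mp hA.eigenvectorUnitary.2
  have key : μ • (1 : Matrix n n ℝ) - A
      = U * ((μ • 1 : Matrix n n ℝ) - diagonal (RCLike.ofReal ∘ hA.eigenvalues)) * star U := by
    rw [Matrix.mul_sub, Matrix.sub_mul]; conv_lhs => rw [hA.spectral_theorem, Unitary.conjStarAlgAut_apply]
    congr 1
    rw [Matrix.mul_smul, mul_one, Matrix.smul_mul, hU]
  have hpsd : (μ • (1 : Matrix n n ℝ) - A).PosSemidef := by
    rw [key, show (star U : Matrix n n ℝ) = Uᴴ from rfl]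
    refine Matrix.PosSemidef.mul_mul_conjTranspose_same ?_ U
    rw [smul_one_eq_diagonal, diagonal_sub]
    refine posSemidef_diagonal_iff.mpr fun i => ?_
    have : (RCLike.ofReal (hA.eigenvalues i) : ℝ) = hA.eigenvalues i := rfl
    simp [this, hμ i]
  have h := quad_nonneg' hpsd x
  rw [sub_mulVec, dotProduct_sub, smul_mulVec, one_mulVec, dotProduct_smul,
    smul_eq_mul] at h
  linarith

lemma eig_ge' {A : Matrix n n ℝ} (hA : A.IsHermitian) {c : ℝ}
    (h : (A - c • 1).PosSemidef) (i : n) : c ≤ hA.eigenvalues i := by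
  set v : n → ℝ := ⇑(hA.eigenvectorBasis i) with hv
  have hvne : v ≠ 0 := by
    intro h0
    exact hA.eigenvectorBasis.orthonormal.ne_zero i (by ext j; exact congrFun h0 j)
  have hvv : 0 < v ⬝ᵥ v := by
    have := Matrix.dotProduct_star_self_pos_iff (v := v) |>.mpr hvne
    simpa using this
  have hmul : (A - c • 1) *ᵥ v = (hA.eigenvalues i - c) • v := by
    rw [sub_mulVec, hA.mulVec_eigenvectorBasis, smul_mulVec, one_mulVec, sub_smul]
  have h2 := quad_nonneg' h v
  rw [hmul, dotProduct_smul, smul_eq_mul] at h2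
  nlinarith [h2, hvv]

lemma det_gt_of' [Nonempty n] {N : Matrix n n ℝ} (hN : N.IsHermitian)
    (hN1 : (N - 1).PosSemidef) {t : ℝ} (ht : 0 < t) {w : n → ℝ}
    (hw : 0 < w ⬝ᵥ w) (hq : t * (w ⬝ᵥ w) < w ⬝ᵥ N *ᵥ w) : t < N.det := by
  have hge : ∀ i, 1 ≤ hN.eigenvalues i := fun i =>
    eig_ge' hN (by rw [one_smul]; exact hN1) i
  obtain ⟨i₁, hi₁⟩ := Finite.exists_max hN.eigenvalues
  have hray := rayleigh_le' hN (μ := hN.eigenvalues i₁) hi₁ w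
  have h1 : t < hN.eigenvalues i₁ := by nlinarith
  have hdet : N.det = ∏ i, hN.eigenvalues i := by
    simpa using hN.det_eq_prod_eigenvalues
  have h2 : hN.eigenvalues i₁ ≤ ∏ i, hN.eigenvalues i := by
    rw [← Finset.prod_erase_mul Finset.univ _ (Finset.mem_univ i₁)]
    have h3 : (1:ℝ) ≤ ∏ i ∈ Finset.univ.erase i₁, hN.eigenvalues i := by
      rw [show (1:ℝ) = ∏ _i ∈ Finset.univ.erase i₁, (1:ℝ) by simp]
      exact Finset.prod_le_prod (by simp) (fun i _ => hge i)
    nlinarith [hge i₁]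
  rw [hdet]; linarith

end Helpers

open scoped ComplexOrder in
/-- The square root of a positive semidefinite matrix, as defined in Mathlib (Dec 2024). -/
noncomputable def Matrix.PosSemidef.sqrt {n : Type*} [Fintype n] [DecidableEq n] {𝕜 : Type*} [RCLike 𝕜]
    {A : Matrix n n 𝕜} (hA : A.PosSemidef) : Matrix n n 𝕜 :=
  (hA.1.eigenvectorUnitary : Matrix n n 𝕜) * diagonal ((↑) ∘ Real.sqrt ∘ hA.1.eigenvalues) *
    (star (hA.1.eigenvectorUnitary : Matrix n n 𝕜))

lemma Matrix.PosSemidef.posSemidef_sqrt {n : Type*} [Fintype n] [DecidableEq n]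
    {A : Matrix n n ℝ} (hA : A.PosSemidef) : hA.sqrt.PosSemidef := by
  unfold Matrix.PosSemidef.sqrt
  refine Matrix.PosSemidef.mul_mul_conjTranspose_same ?_ _
  refine posSemidef_diagonal_iff.mpr fun i => ?_
  simp [Real.sqrt_nonneg]

lemma Matrix.PosSemidef.sqrt_mul_self {n : Type*} [Fintype n] [DecidableEq n]
    {A : Matrix n n ℝ} (hA : A.PosSemidef) : hA.sqrt * hA.sqrt = A := by
  unfold Matrix.PosSemidef.sqrt
  have hU : star (hA.1.eigenvectorUnitary : Matrix n n ℝ) * hA.1.eigenvectorUnitary = 1 :=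
    mem_unitaryGroup_iff'.mp hA.1.eigenvectorUnitary.2
  conv_rhs => rw [hA.1.spectral_theorem, Unitary.conjStarAlgAut_apply]
  simp only [mul_assoc]
  rw [← mul_assoc (star (hA.1.eigenvectorUnitary : Matrix n n ℝ)) (hA.1.eigenvectorUnitary : Matrix n n ℝ), hU, one_mul, ← mul_assoc (diagonal (RCLike.ofReal ∘ Real.sqrt ∘ hA.1.eigenvalues)), diagonal_mul_diagonal]
  congr 3
  funext i
  simp [Real.mul_self_sqrt (hA.eigenvalues_nonneg i)]

set_option maxHeartbeats 1000000 in
/-- Part (ii) ingredient: if the private Rayleigh trigger fires,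
`λ_max((V_a+E_a)^{-1/2}(V_b+E_b)(V_a+E_a)^{-1/2}) > α` with `α > c_ρ`, then
`det V_b / det V_a > α / c_ρ`. -/
theorem stmt_17 {d : ℕ} (Va Vb Ea Eb : Matrix (Fin d) (Fin d) ℝ)
    (hVa : Va.IsHermitian) (hVb : Vb.IsHermitian)
    (hEa : Ea.IsHermitian) (hEb : Eb.IsHermitian)
    (lam η : ℝ) (hlam : 0 < lam) (hη : 0 ≤ η)
    (hVal : (Va - lam • (1 : Matrix (Fin d) (Fin d) ℝ)).PosSemidef)
    (hVab : (Vb - Va).PosSemidef)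
    (hEa1 : (η • (1 : Matrix (Fin d) (Fin d) ℝ) - Ea).PosSemidef)
    (hEa2 : (Ea + η • (1 : Matrix (Fin d) (Fin d) ℝ)).PosSemidef)
    (hEb1 : (η • (1 : Matrix (Fin d) (Fin d) ℝ) - Eb).PosSemidef)
    (hEb2 : (Eb + η • (1 : Matrix (Fin d) (Fin d) ℝ)).PosSemidef)
    (ρ cρ : ℝ) (hρ : ρ = η / lam) (hρ1 : ρ < 1) (hcρ : cρ = (1 + ρ) / (1 - ρ))
    (htaP : (Va + Ea).PosSemidef)
    (M : Matrix (Fin d) (Fin d) ℝ)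
    (hM : M = (htaP.sqrt)⁻¹ * (Vb + Eb) * (htaP.sqrt)⁻¹)
    (hMH : M.IsHermitian)
    (α : ℝ) (hα : cρ < α) (hmax : α < ⨆ i, hMH.eigenvalues i) :
    α / cρ < Vb.det / Va.det := by
  -- basic scalar facts
  have hρ0 : 0 ≤ ρ := hρ ▸ div_nonneg hη hlam.le
  have h1ρ : (0:ℝ) < 1 - ρ := by linarith
  have h1ρ' : (0:ℝ) < 1 + ρ := by linarith
  have hcρ1 : 1 ≤ cρ := by rw [hcρ, le_div_iff₀ h1ρ]; linarith
  have hcρpos : 0 < cρ := by linarith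
  have hαpos : 0 < α := by linarith
  have ht : 0 < α / cρ := div_pos hαpos hcρpos
  have hetalam : η < lam := by
    have := hρ1; rw [hρ] at this; exact (div_lt_one hlam).mp this
  have hρlam : ρ * lam = η := by rw [hρ]; field_simp
  -- rule out d = 0
  rcases isEmpty_or_nonempty (Fin d) with hd | hd
  · exfalso
    have h0 : (⨆ i, hMH.eigenvalues i) = 0 := by
      rw [iSup, Set.range_eq_empty, Real.sSup_empty]
    rw [h0] at hmax; linarith
  -- the maximal eigenvalue of M
  have hex : ∃ i, α < hMH.eigenvalues i := by
    by_contra hc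
    push_neg at hc
    exact absurd hmax (not_lt.mpr (ciSup_le hc))
  obtain ⟨i₀, hi₀⟩ := hex
  set μ : ℝ := hMH.eigenvalues i₀ with hμdef
  -- positive definiteness of Va + Ea
  have hlamη1 : ((lam - η) • (1 : Matrix (Fin d) (Fin d) ℝ)).PosDef := by
    rw [smul_one_eq_diagonal]
    exact Matrix.PosDef.diagonal (fun _ => by linarith)
  have htaPD : (Va + Ea).PosDef := by
    have hsum := hVal.add hEa2
    have heq : Va + Ea = ((Va - lam • 1) + (Ea + η • 1)) + (lam - η) •
        (1 : Matrix (Fin d) (Fin d) ℝ) := by module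
    rw [heq]
    exact Matrix.PosDef.posSemidef_add hsum hlamη1
  -- the square root S of Va + Ea
  set S : Matrix (Fin d) (Fin d) ℝ := htaP.sqrt with hSdef
  have hSH : S.IsHermitian := htaP.posSemidef_sqrt.isHermitian
  have hSS : S * S = Va + Ea := htaP.sqrt_mul_self
  have hdetS : IsUnit S.det := by
    have h : S.det * S.det = (Va + Ea).det := by rw [← det_mul, hSS]
    have h2 := htaPD.det_pos
    refine isUnit_iff_ne_zero.mpr fun h0 => ?_
    rw [h0, mul_zero] at h; linarith
  have hS1 : S * S⁻¹ = 1 := mul_nonsing_inv _ hdetS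
  have hS2 : S⁻¹ * S = 1 := nonsing_inv_mul _ hdetS
  have hSiH : S⁻¹.IsHermitian := hSH.inv
  -- eigenvector of M
  set v : Fin d → ℝ := ⇑(hMH.eigenvectorBasis i₀) with hvdef
  have hv : M *ᵥ v = μ • v := hMH.mulVec_eigenvectorBasis i₀
  have hvne : v ≠ 0 := by
    intro h0
    exact hMH.eigenvectorBasis.orthonormal.ne_zero i₀ (by ext j; exact congrFun h0 j)
  have hvv : 0 < v ⬝ᵥ v := by
    have := Matrix.dotProduct_star_self_pos_iff (v := v) |>.mpr hvne
    simpa using this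
  set u : Fin d → ℝ := S⁻¹ *ᵥ v with hudef
  have hSu : S *ᵥ u = v := by rw [hudef, mulVec_mulVec, hS1, one_mulVec]
  have hune : u ≠ 0 := by
    intro h0; apply hvne; rw [← hSu, h0, mulVec_zero]
  have hsu : 0 < u ⬝ᵥ u := by
    have := Matrix.dotProduct_star_self_pos_iff (v := u) |>.mpr hune
    simpa using this
  -- quadratic form identities
  have hA_eq : u ⬝ᵥ (Va + Ea) *ᵥ u = v ⬝ᵥ v := by
    rw [← hSS, ← mulVec_mulVec, herm_dot' hSH, hSu]
  have hMv : M *ᵥ v = S⁻¹ *ᵥ ((Vb + Eb) *ᵥ u) := by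
    rw [hM, ← mulVec_mulVec, ← mulVec_mulVec]
  have hB_eq : u ⬝ᵥ (Vb + Eb) *ᵥ u = v ⬝ᵥ M *ᵥ v := by
    rw [hMv, herm_dot' hSiH]
  have hvMv : v ⬝ᵥ M *ᵥ v = μ * (v ⬝ᵥ v) := by
    rw [hv, dotProduct_smul, smul_eq_mul]
  have hkey : u ⬝ᵥ (Vb + Eb) *ᵥ u = μ * (u ⬝ᵥ (Va + Ea) *ᵥ u) := by
    rw [hB_eq, hvMv, hA_eq]
  have e1 : u ⬝ᵥ (Va + Ea) *ᵥ u = u ⬝ᵥ Va *ᵥ u + u ⬝ᵥ Ea *ᵥ u := by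
    rw [add_mulVec, dotProduct_add]
  have e2 : u ⬝ᵥ (Vb + Eb) *ᵥ u = u ⬝ᵥ Vb *ᵥ u + u ⬝ᵥ Eb *ᵥ u := by
    rw [add_mulVec, dotProduct_add]
  have hva_pos : 0 < u ⬝ᵥ Va *ᵥ u + u ⬝ᵥ Ea *ᵥ u := by
    rw [← e1, hA_eq]; exact hvv
  have hkey' : u ⬝ᵥ Vb *ᵥ u + u ⬝ᵥ Eb *ᵥ u
      = μ * (u ⬝ᵥ Va *ᵥ u + u ⬝ᵥ Ea *ᵥ u) := by
    rw [← e1, ← e2]; exact hkey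
  -- scalar inequalities from the PSD hypotheses
  have q1 := quad_nonneg' hVal u
  rw [sub_mulVec, dotProduct_sub, smul_mulVec, one_mulVec, dotProduct_smul,
    smul_eq_mul] at q1
  have q2 := quad_nonneg' hVab u
  rw [sub_mulVec, dotProduct_sub] at q2
  have q4 := quad_nonneg' hEa2 u
  rw [add_mulVec, dotProduct_add, smul_mulVec, one_mulVec, dotProduct_smul,
    smul_eq_mul] at q4
  have q5 := quad_nonneg' hEb1 u
  rw [sub_mulVec, dotProduct_sub, smul_mulVec, one_mulVec, dotProduct_smul,
    smul_eq_mul] at q5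
  -- the key scalar inequality
  have haa : 0 < u ⬝ᵥ Va *ᵥ u := by nlinarith
  have hbb : u ⬝ᵥ Va *ᵥ u ≤ u ⬝ᵥ Vb *ᵥ u := by linarith
  have hηs_ρa : η * (u ⬝ᵥ u) ≤ ρ * (u ⬝ᵥ Va *ᵥ u) := by
    nlinarith [mul_nonneg hρ0 q1]
  have hstep1 : α * (u ⬝ᵥ Va *ᵥ u + u ⬝ᵥ Ea *ᵥ u)
      < u ⬝ᵥ Vb *ᵥ u + u ⬝ᵥ Eb *ᵥ u := by
    rw [hkey']
    exact mul_lt_mul_of_pos_right hi₀ hva_pos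
  have htcρ : (α / cρ) * (1 + ρ) = α * (1 - ρ) := by
    rw [hcρ]; field_simp
  have h6 : (α * (1 - ρ)) * (u ⬝ᵥ Va *ᵥ u) < (1 + ρ) * (u ⬝ᵥ Vb *ᵥ u) := by
    nlinarith [mul_nonneg hαpos.le q4, mul_le_mul_of_nonneg_left hηs_ρa hαpos.le,
      mul_le_mul_of_nonneg_left hbb hρ0, q5, hηs_ρa]
  have htb : (α / cρ) * (u ⬝ᵥ Va *ᵥ u) < u ⬝ᵥ Vb *ᵥ u := by
    have h7 : (1 + ρ) * ((α / cρ) * (u ⬝ᵥ Va *ᵥ u)) < (1 + ρ) * (u ⬝ᵥ Vb *ᵥ u) := by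
      nlinarith [h6, htcρ]
    exact lt_of_mul_lt_mul_left h7 h1ρ'.le
  -- positive definiteness of Va and its square root T
  have hVaPD : Va.PosDef := by
    have hlam1 : (lam • (1 : Matrix (Fin d) (Fin d) ℝ)).PosDef := by
      rw [smul_one_eq_diagonal]
      exact Matrix.PosDef.diagonal (fun _ => hlam)
    have heq : Va = (Va - lam • 1) + lam • (1 : Matrix (Fin d) (Fin d) ℝ) := by module
    rw [heq]
    exact Matrix.PosDef.posSemidef_add hVal hlam1
  set T : Matrix (Fin d) (Fin d) ℝ := hVaPD.posSemidef.sqrt with hTdef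
  have hTH : T.IsHermitian := hVaPD.posSemidef.posSemidef_sqrt.isHermitian
  have hTT : T * T = Va := hVaPD.posSemidef.sqrt_mul_self
  have hdetTT : T.det * T.det = Va.det := by rw [← det_mul, hTT]
  have hVadet : 0 < Va.det := hVaPD.det_pos
  have hdetT : IsUnit T.det := by
    refine isUnit_iff_ne_zero.mpr fun h0 => ?_
    rw [h0, mul_zero] at hdetTT; linarith
  have hT1 : T * T⁻¹ = 1 := mul_nonsing_inv _ hdetT
  have hT2 : T⁻¹ * T = 1 := nonsing_inv_mul _ hdetT
  have hTiH : T⁻¹.IsHermitian := hTH.inv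
  set N : Matrix (Fin d) (Fin d) ℝ := T⁻¹ * Vb * T⁻¹ with hNdef
  have hNH : N.IsHermitian := by
    have h := isHermitian_conjTranspose_mul_mul T⁻¹ hVb
    rwa [show (T⁻¹)ᴴ = T⁻¹ from hTiH] at h
  have hT1Va : T⁻¹ * Va * T⁻¹ = 1 := by
    rw [← hTT]
    simp only [mul_assoc]
    rw [hT1, mul_one, hT2]
  have hN1 : (N - 1).PosSemidef := by
    have h := hVab.conjTranspose_mul_mul_same T⁻¹
    rw [show (T⁻¹)ᴴ = T⁻¹ from hTiH] at h
    have heq : T⁻¹ * (Vb - Va) * T⁻¹ = N - 1 := by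
      rw [Matrix.mul_sub, Matrix.sub_mul, hT1Va]
    rwa [heq] at h
  set w : Fin d → ℝ := T *ᵥ u with hwdef
  have hww : u ⬝ᵥ Va *ᵥ u = w ⬝ᵥ w := by
    rw [← hTT, ← mulVec_mulVec, herm_dot' hTH]
  have hTw : T⁻¹ *ᵥ w = u := by rw [hwdef, mulVec_mulVec, hT2, one_mulVec]
  have hNw : w ⬝ᵥ N *ᵥ w = u ⬝ᵥ Vb *ᵥ u := by
    have h2 : N *ᵥ w = T⁻¹ *ᵥ (Vb *ᵥ u) := by
      rw [hNdef, ← mulVec_mulVec, hTw, ← mulVec_mulVec]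
    rw [h2, herm_dot' hTiH, hTw]
  have hgt : α / cρ < N.det := by
    refine det_gt_of' hNH hN1 ht (w := w) ?_ ?_
    · rw [← hww]; exact haa
    · rw [hNw, ← hww]; exact htb
  have hTdetne : T.det ≠ 0 := hdetT.ne_zero
  have hdetN : N.det = Vb.det / Va.det := by
    rw [hNdef, det_mul, det_mul, det_nonsing_inv, Ring.inverse_eq_inv']
    rw [← hdetTT]
    field_simp
  rwa [hdetN] at hgt
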